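/- Fix X ∈ ℝ^{n×d}, vectors Y, μ ∈ ℝ^n, and set ε := Y − μ. Let A : ℝ → ℝ be any function, A(v) := Σ_{i=1}^n A(v_i), ℓ(θ) := (1/n)(−YᵀXθ + A(Xθ)), Risk(θ) := (1/n)(−μᵀXθ + A(Xθ)). Let λ > 0, z ∈ Δ_d, and let θ̂_λ be a minimizer over the probability simplex Δ_d of θ ↦ ℓ(θ) + λ D_KL(θ, z). Then for every θ ∈ Δ_d with D_KL(θ, z) < ∞: Risk(θ̂_λ) − Risk(θ) ≤ (1/λ)‖Xᵀε/n‖_∞² + 2λ D_KL(θ, z). -/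

import Mathlib

set_option maxHeartbeats 1000000


open Finset

/-- The GLM objective `(1/n) (−Yᵀ(Xθ) + Σ_i A((Xθ)_i))`. -/
noncomputable def glmObj {n d : ℕ} (X : Matrix (Fin n) (Fin d) ℝ) (Y : Fin n → ℝ)
    (A : ℝ → ℝ) (θ : Fin d → ℝ) : ℝ :=
  (1 / (n : ℝ)) * (-(∑ i, Y i * X.mulVec θ i) + ∑ i, A (X.mulVec θ i))

/-- The probability simplex `Δ_d = {a : a_i ≥ 0, Σ a_i = 1}`. -/
def probSimplex (d : ℕ) : Set (Fin d → ℝ) :=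
  {a | (∀ i, 0 ≤ a i) ∧ ∑ i, a i = 1}

/-- Kullback–Leibler divergence `Σ_i a_i log(a_i / b_i)` (finite-valued formula, with the
convention `0 · log 0 = 0`; it agrees with the usual KL divergence whenever `a` is
absolutely continuous with respect to `b`, i.e. `b_i = 0 → a_i = 0`). -/
noncomputable def klDiv' {d : ℕ} (a b : Fin d → ℝ) : ℝ :=
  ∑ i, a i * Real.log (a i / b i)


noncomputable def Dfun (x : ℝ) : ℝ := Real.log x - 3*(x^2+4*x-5)/(2*(x+2)^2)

lemma Dfun_hasDeriv {x : ℝ} (hx : 0 < x) :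
    HasDerivAt Dfun ((x-1)^2*(x+8)/(x*(x+2)^3)) x := by
  have h2 : (2*(x+2)^2) ≠ 0 := by positivity
  have hnum : HasDerivAt (fun y : ℝ => 3*(y^2+4*y-5)) (3*(2*x+4*1)) x := by
    have := (((hasDerivAt_pow 2 x).add ((hasDerivAt_id' x).const_mul 4)).sub_const 5).const_mul 3
    norm_num at this ⊢
    convert this using 1
  have hden : HasDerivAt (fun y : ℝ => 2*(y+2)^2) (2*(2*(x+2))) x := by
    have := (((hasDerivAt_id' x).add_const 2).pow 2).const_mul 2
    norm_num at this ⊢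
    convert this using 1
  have hdiv := hnum.div hden h2
  have hlog := Real.hasDerivAt_log hx.ne'
  have h := hlog.sub hdiv
  refine (h : HasDerivAt Dfun _ x).congr_deriv ?_
  have hx2 : x + 2 ≠ 0 := by positivity
  field_simp
  ring

lemma Dfun_one : Dfun 1 = 0 := by norm_num [Dfun]

lemma Dfun_mono : MonotoneOn Dfun (Set.Ioi 0) := by
  have hd : ∀ x ∈ Set.Ioi (0:ℝ), HasDerivAt Dfun ((x-1)^2*(x+8)/(x*(x+2)^3)) x :=
    fun x hx => Dfun_hasDeriv hx
  apply monotoneOn_of_deriv_nonneg (convex_Ioi 0)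
  · exact fun x hx => (hd x hx).continuousAt.continuousWithinAt
  · rw [interior_Ioi]
    exact fun x hx => (hd x hx).differentiableAt.differentiableWithinAt
  · rw [interior_Ioi]
    intro x hx
    rw [(hd x hx).deriv]
    have hx0 : (0:ℝ) < x := hx
    positivity

noncomputable def phiF (x : ℝ) : ℝ := x * Real.log x - x + 1 - 3*(x-1)^2/(2*x+4)

lemma phiF_hasDeriv {x : ℝ} (hx : 0 < x) : HasDerivAt phiF (Dfun x) x := by
  have hne : x ≠ 0 := hx.ne'
  have h4 : (2*x+4) ≠ 0 := by positivity
  have h1 : HasDerivAt (fun y : ℝ => y * Real.log y) (1 * Real.log x + x * x⁻¹) x :=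
    (hasDerivAt_id' x).mul (Real.hasDerivAt_log hne)
  have hnum : HasDerivAt (fun y : ℝ => 3*(y-1)^2) (3*(2*(x-1))) x := by
    have := (((hasDerivAt_id' x).sub_const 1).pow 2).const_mul 3
    norm_num at this ⊢
    convert this using 1
  have hden : HasDerivAt (fun y : ℝ => 2*y+4) (2*1) x :=
    ((hasDerivAt_id' x).const_mul 2).add_const 4
  have hdiv := hnum.div hden h4
  have h := (((h1.sub (hasDerivAt_id' x)).add_const 1).sub hdiv)
  refine (h : HasDerivAt phiF _ x).congr_deriv ?_
  have hx2 : x + 2 ≠ 0 := by positivity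
  simp only [Dfun]
  field_simp
  ring

lemma phiF_one : phiF 1 = 0 := by norm_num [phiF]

lemma phiF_nonneg {x : ℝ} (hx : 0 ≤ x) : 0 ≤ phiF x := by
  rcases eq_or_lt_of_le hx with h | h
  · rw [← h]; norm_num [phiF]
  rcases le_or_gt 1 x with h1 | h1
  · have hm : MonotoneOn phiF (Set.Icc 1 x) := by
      apply monotoneOn_of_deriv_nonneg (convex_Icc 1 x)
      · intro y hy
        exact (phiF_hasDeriv (lt_of_lt_of_le one_pos hy.1)).continuousAt.continuousWithinAt
      · rw [interior_Icc]
        intro y hy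
        exact (phiF_hasDeriv (by linarith [hy.1])).differentiableAt.differentiableWithinAt
      · rw [interior_Icc]
        intro y hy
        have hy0 : (0:ℝ) < y := by linarith [hy.1]
        rw [(phiF_hasDeriv hy0).deriv]
        have := Dfun_mono (Set.mem_Ioi.2 one_pos) (Set.mem_Ioi.2 hy0) hy.1.le
        rwa [Dfun_one] at this
    have := hm (Set.left_mem_Icc.2 h1) (Set.right_mem_Icc.2 h1) h1
    rw [phiF_one] at this
    exact this
  · have hm : AntitoneOn phiF (Set.Icc x 1) := by
      apply antitoneOn_of_deriv_nonpos (convex_Icc x 1)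
      · intro y hy
        exact (phiF_hasDeriv (lt_of_lt_of_le h hy.1)).continuousAt.continuousWithinAt
      · rw [interior_Icc]
        intro y hy
        exact (phiF_hasDeriv (lt_trans h hy.1)).differentiableAt.differentiableWithinAt
      · rw [interior_Icc]
        intro y hy
        have hy0 : (0:ℝ) < y := lt_trans h hy.1
        rw [(phiF_hasDeriv hy0).deriv]
        have := Dfun_mono (Set.mem_Ioi.2 hy0) (Set.mem_Ioi.2 one_pos) hy.2.le
        rwa [Dfun_one] at this
    have := hm (Set.left_mem_Icc.2 h1.le) (Set.right_mem_Icc.2 h1.le) h1.le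
    rw [phiF_one] at this
    exact this

lemma ptwise {a b : ℝ} (ha : 0 ≤ a) (hb : 0 ≤ b) (hab : b = 0 → a = 0) :
    3*(a-b)^2/(2*a+4*b) + (a - b) ≤ a * Real.log (a/b) := by
  rcases eq_or_lt_of_le hb with h | hbpos
  · rw [← h] at hab ⊢
    simp [hab rfl]
  obtain ⟨x, hx0, rfl⟩ : ∃ x, 0 ≤ x ∧ a = b * x :=
    ⟨a/b, div_nonneg ha hb, by field_simp⟩
  have hphi := phiF_nonneg hx0
  simp only [phiF] at hphi
  have hbne : b ≠ 0 := hbpos.ne'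
  have hlog : b * x / b = x := by field_simp
  rw [hlog]
  have hden : (0:ℝ) < 2*x+4 := by linarith
  have hEq : 3*(b*x - b)^2/(2*(b*x)+4*b) = b * (3*(x-1)^2/(2*x+4)) := by
    field_simp
  rw [hEq]
  nlinarith [mul_nonneg hbpos.le hphi]

lemma pinsker_aux {d : ℕ} (a b : Fin d → ℝ) (ha : ∀ i, 0 ≤ a i) (hb : ∀ i, 0 ≤ b i)
    (hsa : ∑ i, a i = 1) (hsb : ∑ i, b i = 1) (hac : ∀ i, b i = 0 → a i = 0) :
    (∑ i, |a i - b i|)^2 ≤ 2 * klDiv' a b := by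
  have key := sum_sq_le_sum_mul_sum_of_sq_eq_mul Finset.univ
    (r := fun i => |a i - b i|)
    (f := fun i => 3*(a i - b i)^2 / (2*a i + 4*b i))
    (g := fun i => (2*a i + 4*b i)/3)
    (fun i _ => div_nonneg (by positivity) (by linarith [ha i, hb i]))
    (fun i _ => div_nonneg (by linarith [ha i, hb i]) (by norm_num))
    (fun i _ => by
      rcases eq_or_lt_of_le (hb i) with h | hbpos
      · simp [← h, hac i h.symm]
      · have h1 : (0:ℝ) < 2*a i + 4*b i := by linarith [ha i]
        rw [sq_abs]
        rw [div_mul_div_comm, eq_div_iff (mul_pos h1 three_pos).ne']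
        try ring)
  have hg : ∑ i, (2*a i + 4*b i)/3 = 2 := by
    rw [← Finset.sum_div]
    rw [Finset.sum_add_distrib, ← Finset.mul_sum, ← Finset.mul_sum, hsa, hsb]
    norm_num
  have h0 : ∑ i, (a i - b i) = (0:ℝ) := by
    rw [Finset.sum_sub_distrib, hsa, hsb]; ring
  have hf : ∑ i, 3*(a i - b i)^2/(2*a i + 4*b i) ≤ klDiv' a b := by
    have hle : ∑ i, (3*(a i - b i)^2/(2*a i + 4*b i) + (a i - b i)) ≤ klDiv' a b :=
      Finset.sum_le_sum fun i _ => ptwise (ha i) (hb i) (hac i)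
    rw [Finset.sum_add_distrib, h0, add_zero] at hle
    exact hle
  calc (∑ i, |a i - b i|)^2
      ≤ (∑ i, 3*(a i - b i)^2/(2*a i + 4*b i)) * ∑ i, (2*a i + 4*b i)/3 := key
    _ ≤ klDiv' a b * 2 := by
        rw [hg]
        have h2 : (0:ℝ) ≤ ∑ i, 3*(a i - b i)^2/(2*a i + 4*b i) :=
          Finset.sum_nonneg fun i _ => div_nonneg (by positivity) (by linarith [ha i, hb i])
        nlinarith
    _ = 2 * klDiv' a b := mul_comm _ _

/-- **Risk bound for the KL-regularized GLM estimator.**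
Fix `X`, `Y`, `μ`, a cumulant `A`, `lam > 0` and an anchor `z ∈ Δ_d`. If `θhat` minimizes
`ℓ(θ) + lam·D_KL(θ, z)` over the probability simplex, then for every `θ ∈ Δ_d` with
`D_KL(θ, z) < ∞` (i.e. `θ` absolutely continuous w.r.t. `z`):
`Risk(θhat) - Risk(θ) ≤ (1/lam) ‖Xᵀε/n‖_∞² + 2·lam·D_KL(θ, z)`. -/
theorem kl_glm_risk_bound {n d : ℕ} (hn : 0 < n)
    (X : Matrix (Fin n) (Fin d) ℝ) (Y μ : Fin n → ℝ) (A : ℝ → ℝ)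
    (lam : ℝ) (hlam : 0 < lam)
    (z : Fin d → ℝ) (hz : z ∈ probSimplex d)
    (θhat : Fin d → ℝ) (hθhat_mem : θhat ∈ probSimplex d)
    (hθhat_ac : ∀ i, z i = 0 → θhat i = 0)
    (hmin : ∀ θ ∈ probSimplex d, (∀ i, z i = 0 → θ i = 0) →
      glmObj X Y A θhat + lam * klDiv' θhat z ≤ glmObj X Y A θ + lam * klDiv' θ z)
    (θ : Fin d → ℝ) (hθ : θ ∈ probSimplex d) (hac : ∀ i, z i = 0 → θ i = 0) :
    glmObj X μ A θhat - glmObj X μ A θ ≤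
      1 / lam * (⨆ j, |X.transpose.mulVec (fun i => Y i - μ i) j / n|) ^ 2
        + 2 * lam * klDiv' θ z := by
  set c : Fin d → ℝ := fun j => X.transpose.mulVec (fun i => Y i - μ i) j / n with hc
  set s : ℝ := ⨆ j, |c j| with hs
  have hdne : Nonempty (Fin d) := by
    rcases Nat.eq_zero_or_pos d with h | h
    · exact absurd hθ.2 (by subst h; simp)
    · exact ⟨⟨0, h⟩⟩
  have hbdd : BddAbove (Set.range fun j => |c j|) := (Set.finite_range _).bddAbove
  have hcs : ∀ j, |c j| ≤ s := fun j => le_ciSup hbdd j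
  have hs0 : 0 ≤ s := le_trans (abs_nonneg _) (hcs (Classical.arbitrary _))
  -- key identity
  have key : ∀ v : Fin d → ℝ, glmObj X μ A v = glmObj X Y A v + ∑ j, c j * v j := by
    intro v
    have h1 : ∑ j, c j * v j
        = (1 / (n:ℝ)) * ∑ i, (Y i - μ i) * X.mulVec v i := by
      simp only [hc, Matrix.mulVec, Matrix.transpose_apply, dotProduct, Finset.mul_sum]
      calc ∑ j, (∑ i, X i j * (Y i - μ i)) / (n:ℝ) * v j
          = ∑ j, ∑ i, X i j * (Y i - μ i) / (n:ℝ) * v j := by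
            refine Finset.sum_congr rfl fun j _ => ?_
            rw [Finset.sum_div, Finset.sum_mul]
        _ = ∑ i, ∑ j, X i j * (Y i - μ i) / (n:ℝ) * v j := Finset.sum_comm
        _ = ∑ i, ∑ j, 1 / (n:ℝ) * ((Y i - μ i) * (X i j * v j)) := by
            refine Finset.sum_congr rfl fun i _ => Finset.sum_congr rfl fun j _ => by ring
    rw [h1]
    simp only [glmObj]
    simp_rw [sub_mul]
    rw [Finset.sum_sub_distrib]
    ring
  set K : ℝ := klDiv' θ z with hK
  set Kh : ℝ := klDiv' θhat z with hKh
  set t : ℝ := ∑ j, |θhat j - z j| with ht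
  set u : ℝ := ∑ j, |θ j - z j| with hu
  have ht0 : 0 ≤ t := Finset.sum_nonneg fun j _ => abs_nonneg _
  have hu0 : 0 ≤ u := Finset.sum_nonneg fun j _ => abs_nonneg _
  have hpt : t^2 ≤ 2 * Kh := pinsker_aux θhat z hθhat_mem.1 hz.1 hθhat_mem.2 hz.2 hθhat_ac
  have hpu : u^2 ≤ 2 * K := pinsker_aux θ z hθ.1 hz.1 hθ.2 hz.2 hac
  have hmin' := hmin θ hθ hac
  -- linear term bound
  have hlin : ∑ j, c j * (θhat j - θ j) ≤ s * (t + u) := by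
    calc ∑ j, c j * (θhat j - θ j) ≤ ∑ j, |c j * (θhat j - θ j)| :=
          Finset.sum_le_sum fun j _ => le_abs_self _
      _ = ∑ j, |c j| * |θhat j - θ j| := by simp [abs_mul]
      _ ≤ ∑ j, s * |θhat j - θ j| :=
          Finset.sum_le_sum fun j _ => mul_le_mul_of_nonneg_right (hcs j) (abs_nonneg _)
      _ = s * ∑ j, |θhat j - θ j| := by rw [Finset.mul_sum]
      _ ≤ s * (t + u) := by
          refine mul_le_mul_of_nonneg_left ?_ hs0
          rw [ht, hu, ← Finset.sum_add_distrib]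
          refine Finset.sum_le_sum fun j _ => ?_
          have := abs_sub_le (θhat j) (z j) (θ j)
          calc |θhat j - θ j| ≤ |θhat j - z j| + |z j - θ j| := abs_sub_le _ _ _
            _ = |θhat j - z j| + |θ j - z j| := by rw [abs_sub_comm (z j)]
  have hsplit : glmObj X μ A θhat - glmObj X μ A θ
      = (glmObj X Y A θhat - glmObj X Y A θ) + ∑ j, c j * (θhat j - θ j) := by
    rw [key θhat, key θ]
    have : ∑ j, c j * (θhat j - θ j) = ∑ j, c j * θhat j - ∑ j, c j * θ j := by
      rw [← Finset.sum_sub_distrib]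
      exact Finset.sum_congr rfl fun j _ => by ring
    rw [this]
    ring
  -- AM-GM pieces
  have amgm : ∀ w : ℝ, 0 ≤ w → s * w - lam/2 * w^2 ≤ 1/(2*lam) * s^2 := by
    intro w hw
    rw [show (1/(2*lam) * s^2 : ℝ) = s^2 / (2*lam) by ring, le_div_iff₀ (by positivity)]
    nlinarith [sq_nonneg (s - lam*w)]
  have h1 := amgm t ht0
  have h2 := amgm u hu0
  have hsum : 1/(2*lam) * s^2 + 1/(2*lam) * s^2 = 1/lam * s^2 := by
    field_simp
    ring
  have hKt : lam/2 * t^2 ≤ lam * Kh := by nlinarith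
  have hKu : lam/2 * u^2 ≤ lam * K := by nlinarith
  rw [hsplit]
  have hmain : glmObj X Y A θhat - glmObj X Y A θ ≤ lam * K - lam * Kh := by linarith
  nlinarith [hlin, hmain, h1, h2, hKt, hKu, hsum]
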